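/- Let (R,m) be a one-dimensional Cohen–Macaulay local ring and let I, J be stable regular ideals. Then tr(IJ) ≅ Hom_R(I, tr(J)) as R-modules. -/

import Mathlib

open nonZeroDivisors IsLocalRing

/-- The trace ideal of an `R`-module `M`. -/
noncomputable def traceIdeal (R : Type*) [CommRing R] (M : Type*) [AddCommGroup M]
    [Module R M] : Ideal R :=
  ⨆ f : M →ₗ[R] R, LinearMap.range f

section Aux

variable {R : Type*} [CommRing R]

open Classical in
noncomputable def divAux (x a : R) : R := if h : ∃ t, x * t = a then h.choose else 0

lemma divAux_spec {x a : R} (h : ∃ t, x * t = a) : x * divAux x a = a := by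
  unfold divAux
  rw [dif_pos h]
  exact h.choose_spec

lemma cancelAux {x : R} (hx : x ∈ R⁰) {a b : R} (h : x * a = x * b) : a = b :=
  (mul_cancel_left_mem_nonZeroDivisors hx).mp h

/-- For a stable regular ideal `J`, the dual `Hom(J,R)` is isomorphic to the trace
ideal `tr(J)`, via evaluation at the stability element `y`. -/
lemma dual_equiv_trace (J : Ideal R) {y : R} (hyJ : y ∈ J) (hy : y ∈ R⁰)
    (hst : J ^ 2 = Ideal.span {y} * J) :
    Nonempty (((J : Ideal R) →ₗ[R] R) ≃ₗ[R] traceIdeal R J) := by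
  -- key symmetry: a * g b = b * g a for g : J →ₗ R
  have key : ∀ (g : ↥J →ₗ[R] R) (a b : ↥J), (a : R) * g b = (b : R) * g a := by
    intro g a b
    have h1 : ((a : R) • b) = ((b : R) • a) := Subtype.ext (mul_comm _ _)
    calc (a : R) * g b = g ((a : R) • b) := by rw [map_smul, smul_eq_mul]
      _ = g ((b : R) • a) := by rw [h1]
      _ = (b : R) * g a := by rw [map_smul, smul_eq_mul]
  let Φ : (↥J →ₗ[R] R) →ₗ[R] (traceIdeal R J) :=
    { toFun := fun f => ⟨f ⟨y, hyJ⟩,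
        Submodule.mem_iSup_of_mem f ⟨⟨y, hyJ⟩, rfl⟩⟩
      map_add' := fun f g => rfl
      map_smul' := fun c f => rfl }
  have hinj : Function.Injective Φ := by
    rw [injective_iff_map_eq_zero]
    intro f hf
    have hfy : f ⟨y, hyJ⟩ = 0 := congrArg Subtype.val hf
    ext j
    refine cancelAux hy (a := f j) (b := 0) ?_
    rw [mul_zero]
    have := key f ⟨y, hyJ⟩ j
    simp only [hfy, mul_zero] at this
    rw [← this]
  have hsurj : Function.Surjective Φ := by
    rintro ⟨t, ht⟩
    have main : ∃ f : ↥J →ₗ[R] R, f ⟨y, hyJ⟩ = t := by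
      refine Submodule.iSup_induction (motive := fun a => ∃ f : ↥J →ₗ[R] R, f ⟨y, hyJ⟩ = a)
        (fun f : ↥J →ₗ[R] R => LinearMap.range f) ht ?_ ⟨0, rfl⟩ ?_
      · rintro g a ⟨m, rfl⟩
        have hex : ∀ j : ↥J, ∃ t, y * t = g ((j : R) • m) := by
          intro j
          have hmem : (j : R) * (m : R) ∈ J ^ 2 := by
            rw [pow_two]; exact Ideal.mul_mem_mul j.2 m.2
          rw [hst] at hmem
          obtain ⟨u, hu, huv⟩ := Ideal.mem_span_singleton_mul.mp hmem
          have heq : ((j : R) • m) = y • (⟨u, hu⟩ : ↥J) := Subtype.ext huv.symm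
          exact ⟨g ⟨u, hu⟩, by rw [heq, map_smul, smul_eq_mul]⟩
        refine ⟨{ toFun := fun j => divAux y (g ((j : R) • m))
                  map_add' := ?_
                  map_smul' := ?_ }, ?_⟩
        · intro a b
          refine cancelAux hy ?_
          rw [mul_add, divAux_spec (hex (a + b)), divAux_spec (hex a), divAux_spec (hex b),
            Submodule.coe_add, add_smul, map_add]
        · intro c a
          refine cancelAux hy ?_
          simp only [RingHom.id_apply, smul_eq_mul]
          rw [divAux_spec (hex (c • a)), mul_left_comm, divAux_spec (hex a),
            SetLike.val_smul, smul_eq_mul, mul_smul, map_smul, smul_eq_mul]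
        · show divAux y (g ((y : R) • m)) = g m
          refine cancelAux hy ?_
          rw [divAux_spec (hex ⟨y, hyJ⟩), map_smul, smul_eq_mul]
      · rintro a b ⟨f, hf⟩ ⟨g, hg⟩
        exact ⟨f + g, by rw [LinearMap.add_apply, hf, hg]⟩
    obtain ⟨f, hf⟩ := main
    exact ⟨f, Subtype.ext hf⟩
  exact ⟨LinearEquiv.ofBijective Φ ⟨hinj, hsurj⟩⟩

/-- Currying: for a regular ideal `I`, `Hom(IJ, R) ≅ Hom(I, Hom(J, R))`. -/
lemma dual_mul_equiv_hom (I J : Ideal R) {x : R} (hxI : x ∈ I) (hx : x ∈ R⁰) :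
    Nonempty ((↥(I * J) →ₗ[R] R) ≃ₗ[R] (↥I →ₗ[R] (↥J →ₗ[R] R))) := by
  let E : (↥(I * J) →ₗ[R] R) →ₗ[R] (↥I →ₗ[R] (↥J →ₗ[R] R)) :=
    { toFun := fun f =>
        LinearMap.mk₂ R (fun (i : ↥I) (j : ↥J) => f ⟨(i : R) * (j : R), Ideal.mul_mem_mul i.2 j.2⟩)
          (fun a b j => by
            rw [← map_add]
            exact congrArg f (Subtype.ext (by
              simp only [Submodule.coe_add, AddMemClass.mk_add_mk]; ring)))
          (fun c a j => by
            rw [← map_smul]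
            exact congrArg f (Subtype.ext (by
              simp only [SetLike.val_smul, smul_eq_mul, SetLike.mk_smul_mk]; ring)))
          (fun a b c => by
            rw [← map_add]
            exact congrArg f (Subtype.ext (by
              simp only [Submodule.coe_add, AddMemClass.mk_add_mk]; ring)))
          (fun c a j => by
            rw [← map_smul]
            exact congrArg f (Subtype.ext (by
              simp only [SetLike.val_smul, smul_eq_mul, SetLike.mk_smul_mk]; ring)))
      map_add' := fun f g => LinearMap.ext fun i => LinearMap.ext fun j => rfl
      map_smul' := fun c f => LinearMap.ext fun i => LinearMap.ext fun j => rfl }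
  -- key computation
  have keycalc : ∀ (g : ↥I →ₗ[R] (↥J →ₗ[R] R)) (a : R) (ha : a ∈ I) (b : R) (hb : b ∈ J)
      (hab : a * b ∈ J), x * g ⟨a, ha⟩ ⟨b, hb⟩ = g ⟨x, hxI⟩ ⟨a * b, hab⟩ := by
    intro g a ha b hb hab
    have h1 : (a : R) • (⟨x, hxI⟩ : ↥I) = x • (⟨a, ha⟩ : ↥I) := Subtype.ext (mul_comm a x)
    have h2 := congrArg g h1
    rw [map_smul, map_smul] at h2
    have h3 := LinearMap.congr_fun h2 ⟨b, hb⟩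
    rw [LinearMap.smul_apply, LinearMap.smul_apply, smul_eq_mul, smul_eq_mul] at h3
    have h4 : (⟨a * b, hab⟩ : ↥J) = a • ⟨b, hb⟩ := Subtype.ext rfl
    rw [h4, map_smul, smul_eq_mul, ← h3]
  have hinj : Function.Injective E := by
    rw [injective_iff_map_eq_zero]
    intro f hf
    ext z
    rw [LinearMap.zero_apply]
    refine Submodule.mul_induction_on' (C := fun r hr => f ⟨r, hr⟩ = 0) ?_ ?_ z.2
    · intro a ha b hb
      have := LinearMap.congr_fun (LinearMap.congr_fun hf ⟨a, ha⟩) ⟨b, hb⟩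
      exact this
    · intro r hr s hs h1 h2
      rw [show (⟨r + s, add_mem hr hs⟩ : ↥(I * J)) = ⟨r, hr⟩ + ⟨s, hs⟩ from rfl,
        map_add, h1, h2, add_zero]
  have hsurj : Function.Surjective E := by
    intro g
    have hex : ∀ z : ↥(I * J), ∃ t, x * t = g ⟨x, hxI⟩ ⟨(z : R), Ideal.mul_le_right z.2⟩ := by
      intro z
      obtain ⟨hz, t, ht⟩ :
          ∃ (hz : (z : R) ∈ J) (t : R), x * t = g ⟨x, hxI⟩ ⟨(z : R), hz⟩ := by
        refine Submodule.mul_induction_on'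
          (C := fun r hr => ∃ (h : r ∈ J) (t : R), x * t = g ⟨x, hxI⟩ ⟨r, h⟩) ?_ ?_ z.2
        · intro a ha b hb
          exact ⟨J.mul_mem_left a hb, g ⟨a, ha⟩ ⟨b, hb⟩, keycalc g a ha b hb _⟩
        · rintro r hr s hs ⟨h1, t1, ht1⟩ ⟨h2, t2, ht2⟩
          exact ⟨add_mem h1 h2, t1 + t2, by
            rw [mul_add, ht1, ht2, show (⟨r + s, add_mem h1 h2⟩ : ↥J) = ⟨r, h1⟩ + ⟨s, h2⟩
              from rfl, map_add]⟩
      exact ⟨t, ht⟩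
    refine ⟨{ toFun := fun z => divAux x (g ⟨x, hxI⟩ ⟨(z : R), Ideal.mul_le_right z.2⟩)
              map_add' := ?_
              map_smul' := ?_ }, ?_⟩
    · intro a b
      refine cancelAux hx ?_
      rw [mul_add, divAux_spec (hex (a + b)), divAux_spec (hex a), divAux_spec (hex b),
        show (⟨((a + b : ↥(I * J)) : R), Ideal.mul_le_right (a + b).2⟩ : ↥J) =
          ⟨(a : R), Ideal.mul_le_right a.2⟩ + ⟨(b : R), Ideal.mul_le_right b.2⟩ from rfl,
        map_add]
    · intro c a
      refine cancelAux hx ?_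
      simp only [RingHom.id_apply, smul_eq_mul]
      rw [divAux_spec (hex (c • a)), mul_left_comm, divAux_spec (hex a),
        show (⟨((c • a : ↥(I * J)) : R), Ideal.mul_le_right (c • a).2⟩ : ↥J) =
          c • ⟨(a : R), Ideal.mul_le_right a.2⟩ from rfl,
        map_smul, smul_eq_mul]
    · refine LinearMap.ext fun i => LinearMap.ext fun j => ?_
      show divAux x (g ⟨x, hxI⟩ ⟨(i : R) * (j : R), _⟩) = g i j
      refine cancelAux hx ?_
      rw [divAux_spec (hex ⟨(i : R) * (j : R), Ideal.mul_mem_mul i.2 j.2⟩)]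
      have := keycalc g (i : R) i.2 (j : R) j.2
        (Ideal.mul_le_right (Ideal.mul_mem_mul i.2 j.2))
      rw [← this]
  exact ⟨LinearEquiv.ofBijective E ⟨hinj, hsurj⟩⟩

end Aux

/-- Let `(R,m)` be a one-dimensional Cohen–Macaulay local ring and `I, J`
stable regular ideals.  Then `tr(IJ) ≅ Hom_R(I, tr(J))` as `R`-modules. -/
theorem trace_mul_iso_hom (R : Type*) [CommRing R] [IsLocalRing R] [IsNoetherianRing R]
    (hdim : ringKrullDim R = 1)
    (hCM : ∃ r ∈ maximalIdeal R, r ∈ R⁰)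
    (I J : Ideal R)
    (hIstable : ∃ x ∈ I, x ∈ R⁰ ∧ I ^ 2 = Ideal.span {x} * I)
    (hJstable : ∃ y ∈ J, y ∈ R⁰ ∧ J ^ 2 = Ideal.span {y} * J) :
    Nonempty ((traceIdeal R (I * J : Ideal R)) ≃ₗ[R] (I →ₗ[R] traceIdeal R J)) := by
  obtain ⟨x, hxI, hx, hI⟩ := hIstable
  obtain ⟨y, hyJ, hy, hJ⟩ := hJstable
  have hxyIJ : x * y ∈ I * J := Ideal.mul_mem_mul hxI hyJ
  have hxy : x * y ∈ R⁰ := mul_mem hx hy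
  have hIJ : (I * J) ^ 2 = Ideal.span {x * y} * (I * J) := by
    rw [mul_pow, hI, hJ, ← Ideal.span_singleton_mul_span_singleton]
    ring
  obtain ⟨e1⟩ := dual_equiv_trace (I * J) hxyIJ hxy hIJ
  obtain ⟨e2⟩ := dual_equiv_trace J hyJ hy hJ
  obtain ⟨e3⟩ := dual_mul_equiv_hom I J hxI hx
  exact ⟨e1.symm.trans (e3.trans (LinearEquiv.congrRight e2))⟩
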